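/- Let d ≥ 1 be an integer and let a_1, a_2, …, a_d be real numbers such that (i) a_i ≥ 0 for all 1 ≤ i ≤ d, (ii) a_i ≤ 1 − i/d for all 1 ≤ i ≤ d, and (iii) the sequence is convex, i.e., a_{i−1} − 2a_i + a_{i+1} ≥ 0 for all 2 ≤ i ≤ d−1. Then for every integer k with 0 ≤ k ≤ d, ∑_{i=k+1}^{d} a_i ≤ (1 − k/d)² · ∑_{i=1}^{d} a_i. -/

import Mathlib

/-- Auxiliary: tail sums of the truncated linear ("tent") sequence `i ↦ m - i`. -/
lemma tent_tail_sum : ∀ d k m : ℕ, k ≤ d →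
    ∑ i ∈ Finset.Icc (k + 1) d, (m - i) = (m - k).choose 2 - (m - d).choose 2 := by
  intro d
  induction d with
  | zero =>
    intro k m hk
    interval_cases k
    simp
  | succ d ih =>
    intro k m hk
    rcases Nat.lt_or_ge k (d + 1) with h | h
    · have hkd : k ≤ d := by omega
      rw [Finset.sum_Icc_succ_top (by omega), ih k m hkd]
      have hmono : (m - d).choose 2 ≤ (m - k).choose 2 :=
        Nat.choose_le_choose 2 (Nat.sub_le_sub_left hkd m)
      rcases Nat.lt_or_ge d m with hdm | hdm
      · -- m ≥ d + 1
        have h1 : m - d = (m - (d + 1)) + 1 := by omega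
        have h2 : (m - d).choose 2 = (m - (d + 1)).choose 2 + (m - (d + 1)) := by
          rw [h1, Nat.choose_succ_succ']
          simp [Nat.choose_one_right]
          omega
        have hmono2 : (m - (d+1)).choose 2 ≤ (m - d).choose 2 :=
          Nat.choose_le_choose 2 (by omega)
        omega
      · have h1 : m - d = 0 := by omega
        have h2 : m - (d + 1) = 0 := by omega
        rw [h1, h2]
        simp
    · have hk1 : k = d + 1 := by omega
      subst hk1
      simp
/-- Auxiliary: the per-tent inequality. -/
lemma tent_ineq (d k m : ℕ) (hd : 1 ≤ d) (hm2 : 2 ≤ m) (hmd : m ≤ d) (hkd : k ≤ d) :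
    (((m - k).choose 2 : ℕ) : ℝ) ≤ (1 - (k : ℝ) / d) ^ 2 * ((m.choose 2 : ℕ) : ℝ) := by
  have hD : (0 : ℝ) < d := by exact_mod_cast hd
  rcases Nat.lt_or_ge k m with hkm | hkm
  · -- k < m
    have hKM : (k : ℝ) + 1 ≤ (m : ℝ) := by exact_mod_cast hkm
    have hMD : (m : ℝ) ≤ (d : ℝ) := by exact_mod_cast hmd
    have hK0 : (0 : ℝ) ≤ (k : ℝ) := by positivity
    have hM2 : (2 : ℝ) ≤ (m : ℝ) := by exact_mod_cast hm2
    set M : ℝ := (m : ℝ)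
    set K : ℝ := (k : ℝ)
    set D : ℝ := (d : ℝ)
    have hcastsub : (((m - k : ℕ)) : ℝ) = M - K := by
      push_cast [Nat.cast_sub (le_of_lt hkm)]; ring
    rw [Nat.cast_choose_two, Nat.cast_choose_two, hcastsub]
    have hsq : (1 - K / D) ^ 2 = (D - K) ^ 2 / D ^ 2 := by
      field_simp
    rw [hsq]
    rw [div_mul_eq_mul_div, le_div_iff₀ (by positivity)]
    -- goal : (M - K) * (M - K - 1) / 2 * D ^ 2 ≤ (D - K) ^ 2 * (M * (M - 1) / 2)
    have h1 : (M - K) * D ≤ (D - K) * M := by nlinarith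
    have h2 : M * (M - K - 1) ≤ (M - 1) * (M - K) := by nlinarith
    have h4 : (M - K) ^ 2 * D ^ 2 ≤ (D - K) ^ 2 * M ^ 2 := by
      nlinarith [mul_le_mul h1 h1 (by nlinarith) (by nlinarith)]
    have key : (M - K) * (M - K - 1) * D ^ 2 * M ≤ (D - K) ^ 2 * (M * (M - 1)) * M := by
      nlinarith [mul_le_mul_of_nonneg_right h2 (show (0:ℝ) ≤ (M - K) * D ^ 2 by nlinarith),
        mul_le_mul_of_nonneg_left h4 (show (0:ℝ) ≤ M - 1 by linarith)]
    have hfin : (M - K) * (M - K - 1) * D ^ 2 ≤ (D - K) ^ 2 * (M * (M - 1)) :=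
      le_of_mul_le_mul_right key (by linarith : (0:ℝ) < M)
    linarith [hfin]
  · -- k ≥ m : left side is zero
    have h0 : m - k = 0 := by omega
    rw [h0]
    norm_num
    positivity
/-- Discrete core of Theorem 1: if `a_1, …, a_d` is a nonnegative convex sequence lying
below the line `y = 1 − i/d`, then the tail sum satisfies
`∑_{i=k+1}^{d} a_i ≤ (1 − k/d)² · ∑_{i=1}^{d} a_i` for every `0 ≤ k ≤ d`. -/
theorem tail_sum_le_of_convex_below_line
    (d : ℕ) (hd : 1 ≤ d) (a : ℕ → ℝ)
    (hnonneg : ∀ i, 1 ≤ i → i ≤ d → 0 ≤ a i)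
    (hline : ∀ i, 1 ≤ i → i ≤ d → a i ≤ 1 - (i : ℝ) / d)
    (hconv : ∀ i, 2 ≤ i → i + 1 ≤ d → 0 ≤ a (i - 1) - 2 * a i + a (i + 1))
    (k : ℕ) (hkd : k ≤ d) :
    ∑ i ∈ Finset.Icc (k + 1) d, a i
      ≤ (1 - (k : ℝ) / d) ^ 2 * ∑ i ∈ Finset.Icc 1 d, a i := by
  have hD : (0 : ℝ) < d := by exact_mod_cast hd
  have had : a d = 0 := by
    have h1 := hline d hd le_rfl
    rw [div_self hD.ne'] at h1
    have h2 := hnonneg d hd le_rfl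
    linarith
  set lam : ℕ → ℝ := fun m => if m = d then a (d - 1) else a (m - 1) - 2 * a m + a (m + 1)
    with hlam
  -- telescoping identity
  have tele : ∀ n i, 1 ≤ i → i + 1 + n = d →
      ∑ m ∈ Finset.Icc (i + 1) d, lam m = a i - a (i + 1) := by
    intro n
    induction n with
    | zero =>
      intro i hi1 hid
      have hieq : i + 1 = d := by omega
      have hIcc : Finset.Icc (i + 1) d = {d} := by rw [← hieq]; exact Finset.Icc_self _
      rw [hIcc, Finset.sum_singleton]
      have hi : i = d - 1 := by omega
      simp only [hlam, if_pos rfl]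
      rw [hieq, had, ← hi]
      ring
    | succ n ih =>
      intro i hi1 hid
      have ihl := ih (i + 1) (by omega) (by omega)
      have hsplit : Finset.Icc (i + 1) d = insert (i + 1) (Finset.Icc (i + 2) d) := by
        ext x
        simp only [Finset.mem_Icc, Finset.mem_insert]
        omega
      rw [hsplit, Finset.sum_insert (by simp only [Finset.mem_Icc]; omega)]
      have hne : i + 1 ≠ d := by omega
      have hlval : lam (i + 1) = a i - 2 * a (i + 1) + a (i + 2) := by
        simp only [hlam, if_neg hne]
        norm_num
      rw [hlval, ihl]
      ring
  -- representation of `a` as a combination of tents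
  have rep : ∀ n i, 1 ≤ i → i + n = d →
      a i = ∑ m ∈ Finset.Icc 2 d, lam m * (((m - i : ℕ)) : ℝ) := by
    intro n
    induction n with
    | zero =>
      intro i hi1 hid
      have hi : i = d := by omega
      rw [hi, had]
      symm
      apply Finset.sum_eq_zero
      intro m hm
      have : m - d = 0 := Nat.sub_eq_zero_of_le (Finset.mem_Icc.mp hm).2
      simp [this]
    | succ n ih =>
      intro i hi1 hid
      have ihv := ih (i + 1) (by omega) (by omega)
      have ht := tele n i hi1 (by omega)
      have step : ∀ m ∈ Finset.Icc 2 d,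
          (if i + 1 ≤ m then lam m else 0)
            = lam m * (((m - i : ℕ)) : ℝ) - lam m * (((m - (i + 1) : ℕ)) : ℝ) := by
        intro m _
        rcases le_or_gt (i + 1) m with h | h
        · rw [if_pos h]
          have hrw : m - i = (m - (i + 1)) + 1 := by omega
          rw [hrw]
          push_cast
          ring
        · rw [if_neg (by omega)]
          have h1 : m - i = 0 := by omega
          have h2 : m - (i + 1) = 0 := by omega
          rw [h1, h2]
          simp
      have filt : Finset.filter (fun m => i + 1 ≤ m) (Finset.Icc 2 d) = Finset.Icc (i + 1) d := by
        ext m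
        simp only [Finset.mem_filter, Finset.mem_Icc]
        omega
      have hsum : ∑ m ∈ Finset.Icc (i + 1) d, lam m
          = ∑ m ∈ Finset.Icc 2 d, lam m * (((m - i : ℕ)) : ℝ)
            - ∑ m ∈ Finset.Icc 2 d, lam m * (((m - (i + 1) : ℕ)) : ℝ) := by
        rw [← filt, Finset.sum_filter, Finset.sum_congr rfl step, Finset.sum_sub_distrib]
      linarith [hsum, ht, ihv]
  -- sums of `a` in terms of the tent coefficients
  have sumIcc : ∀ j, j ≤ d → ∑ i ∈ Finset.Icc (j + 1) d, a i
      = ∑ m ∈ Finset.Icc 2 d, lam m * (((m - j).choose 2 : ℕ) : ℝ) := by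
    intro j hj
    have h1 : ∀ i ∈ Finset.Icc (j + 1) d,
        a i = ∑ m ∈ Finset.Icc 2 d, lam m * (((m - i : ℕ)) : ℝ) := by
      intro i hi
      have hmem := Finset.mem_Icc.mp hi
      exact rep (d - i) i (by omega) (by omega)
    rw [Finset.sum_congr rfl h1, Finset.sum_comm]
    refine Finset.sum_congr rfl ?_
    intro m hm
    rw [← Finset.mul_sum]
    congr 1
    have hmd : m ≤ d := (Finset.mem_Icc.mp hm).2
    have hnat := tent_tail_sum d j m hj
    have h0 : m - d = 0 := Nat.sub_eq_zero_of_le hmd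
    rw [h0] at hnat
    simp only [Nat.choose_eq_zero_of_lt (by norm_num : (0:ℕ) < 2), Nat.sub_zero] at hnat
    rw [← Nat.cast_sum, hnat]
  have hT := sumIcc k hkd
  have hS := sumIcc 0 (Nat.zero_le d)
  simp only [Nat.zero_add, Nat.sub_zero] at hS
  rw [hT, hS, Finset.mul_sum]
  apply Finset.sum_le_sum
  intro m hm
  have hmem := Finset.mem_Icc.mp hm
  have hlnn : 0 ≤ lam m := by
    by_cases hme : m = d
    · simp only [hlam, if_pos hme]
      exact hnonneg (d - 1) (by omega) (by omega)
    · simp only [hlam, if_neg hme]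
      exact hconv m hmem.1 (by omega)
  have hti := tent_ineq d k m hd hmem.1 hmem.2 hkd
  calc lam m * (((m - k).choose 2 : ℕ) : ℝ)
      ≤ lam m * ((1 - (k : ℝ) / d) ^ 2 * ((m.choose 2 : ℕ) : ℝ)) :=
        mul_le_mul_of_nonneg_left hti hlnn
    _ = (1 - (k : ℝ) / d) ^ 2 * (lam m * ((m.choose 2 : ℕ) : ℝ)) := by ring
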